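/- Let c1, c2 > 0, p ∈ (0,1) and q > 1, and let V : [0,∞) → ℝ be a nonnegative differentiable function such that V′(t) ≤ −c1·V(t)^p − c2·V(t)^q for every t ≥ 0. Then V(t) = 0 for all t ≥ T, where T = 1/(c1(1−p)) + 1/(c2(q−1)). -/

import Mathlib

open Set

theorem stmt_2 (c1 c2 p q : ℝ) (hc1 : 0 < c1) (hc2 : 0 < c2)
    (hp0 : 0 < p) (hp1 : p < 1) (hq : 1 < q)
    (V : ℝ → ℝ)
    (hVnn : ∀ t, 0 ≤ t → 0 ≤ V t)
    (hVdiff : ∀ t, 0 ≤ t → DifferentiableAt ℝ V t)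
    (hV' : ∀ t, 0 ≤ t → deriv V t ≤ -c1 * V t ^ p - c2 * V t ^ q) :
    ∀ t, 1 / (c1 * (1 - p)) + 1 / (c2 * (q - 1)) ≤ t → V t = 0 := by
  have h1p : 0 < 1 - p := by linarith
  have hq1 : 0 < q - 1 := by linarith
  have hcont : ContinuousOn V (Ici 0) :=
    fun t ht => ((hVdiff t ht).continuousAt).continuousWithinAt
  have hanti : AntitoneOn V (Ici 0) := by
    apply antitoneOn_of_deriv_nonpos (convex_Ici 0) hcont
    · intro x hx
      rw [interior_Ici] at hx
      exact ((hVdiff x hx.le)).differentiableWithinAt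
    · intro x hx
      rw [interior_Ici] at hx
      have h1 := hV' x hx.le
      have h2 : 0 ≤ c1 * V x ^ p := by
        have := Real.rpow_nonneg (hVnn x hx.le) p
        positivity
      have h3 : 0 ≤ c2 * V x ^ q := by
        have := Real.rpow_nonneg (hVnn x hx.le) q
        positivity
      linarith
  set T1 := 1 / (c1 * (1 - p)) with hT1def
  set T2 := 1 / (c2 * (q - 1)) with hT2def
  have hT1 : 0 < T1 := by rw [hT1def]; positivity
  have hT2 : 0 < T2 := by rw [hT2def]; positivity
  have hT1eq : c1 * (1 - p) * T1 = 1 := by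
    rw [hT1def]; field_simp
  have hT2eq : c2 * (q - 1) * T2 = 1 := by
    rw [hT2def]; field_simp
  have key : V (T1 + T2) = 0 := by
    by_contra hne
    have hTpos : (0:ℝ) ≤ T1 + T2 := by linarith
    have hε : 0 < V (T1 + T2) := lt_of_le_of_ne (hVnn _ hTpos) (Ne.symm hne)
    have hlow : ∀ u, 0 ≤ u → u ≤ T1 + T2 → 0 < V u := by
      intro u hu hu2
      exact lt_of_lt_of_le hε (hanti hu hTpos hu2)
    -- Stage A : V T2 ≤ 1
    have hA : V T2 ≤ 1 := by
      by_contra hB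
      push_neg at hB
      have hbig : ∀ u, 0 ≤ u → u ≤ T2 → 1 < V u := fun u hu hu2 =>
        lt_of_lt_of_le hB (hanti hu hT2.le hu2)
      set f : ℝ → ℝ := fun u => V u ^ (1 - q) - c2 * (q - 1) * u with hf
      have hderiv : ∀ u ∈ Ioo (0:ℝ) T2,
          HasDerivAt f ((1 - q) * V u ^ (1 - q - 1) * deriv V u - c2 * (q - 1)) u := by
        intro u hu
        have hVpos : (0:ℝ) < V u := lt_trans one_pos (hbig u hu.1.le hu.2.le)
        have h1 : HasDerivAt V (deriv V u) u := (hVdiff u hu.1.le).hasDerivAt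
        have h2 := h1.rpow_const (p := 1 - q) (Or.inl (ne_of_gt hVpos))
        have h3 : HasDerivAt (fun x : ℝ => c2 * (q - 1) * x) (c2 * (q - 1)) u := by
          simpa using (hasDerivAt_id u).const_mul (c2 * (q - 1))
        exact (h2.sub h3).congr_deriv (by ring)
      have hmono : MonotoneOn f (Icc 0 T2) := by
        apply monotoneOn_of_deriv_nonneg (convex_Icc _ _)
        · apply ContinuousOn.sub
          · intro u hu
            have hVpos : (0:ℝ) < V u := lt_trans one_pos (hbig u hu.1 hu.2)
            exact ((hVdiff u hu.1).continuousAt.rpow_const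
              (Or.inl (ne_of_gt hVpos))).continuousWithinAt
          · exact (continuous_const.mul continuous_id).continuousOn
        · intro u hu
          rw [interior_Icc] at hu
          exact ((hderiv u hu).differentiableAt).differentiableWithinAt
        · intro u hu
          rw [interior_Icc] at hu
          rw [(hderiv u hu).deriv]
          have hVpos : (0:ℝ) < V u := lt_trans one_pos (hbig u hu.1.le hu.2.le)
          have hd := hV' u hu.1.le
          have hApos : 0 < V u ^ (1 - q - 1) := Real.rpow_pos_of_pos hVpos _
          have hAC : V u ^ (1 - q - 1) * V u ^ q = 1 := by
            rw [← Real.rpow_add hVpos]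
            norm_num
          have hBp : 0 ≤ V u ^ (1 - q - 1) * V u ^ p := by positivity
          have hmul := mul_le_mul_of_nonneg_left hd hApos.le
          have h5 : V u ^ (1 - q - 1) * deriv V u ≤ -c2 := by nlinarith [hmul, hAC, hBp]
          have h6 : 0 ≤ (q - 1) * (-(V u ^ (1 - q - 1) * deriv V u) - c2) :=
            mul_nonneg hq1.le (by linarith)
          nlinarith [h6]
      have hle := hmono (left_mem_Icc.mpr hT2.le) (right_mem_Icc.mpr hT2.le) hT2.le
      have hf0 : f 0 = V 0 ^ (1 - q) := by simp [hf]
      have hfT2 : f T2 = V T2 ^ (1 - q) - 1 := by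
        simp only [hf]
        linarith [hT2eq]
      have hlt1 : V T2 ^ (1 - q) < 1 :=
        Real.rpow_lt_one_of_one_lt_of_neg hB (by linarith)
      have hgt0 : 0 < V 0 ^ (1 - q) :=
        Real.rpow_pos_of_pos (hlow 0 le_rfl hTpos) _
      rw [hf0, hfT2] at hle
      linarith
    -- Stage B
    set f2 : ℝ → ℝ := fun u => V u ^ (1 - p) + c1 * (1 - p) * u with hf2
    have hderiv2 : ∀ u ∈ Ioo T2 (T1 + T2),
        HasDerivAt f2 ((1 - p) * V u ^ (1 - p - 1) * deriv V u + c1 * (1 - p)) u := by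
      intro u hu
      have hu0 : (0:ℝ) ≤ u := le_trans hT2.le hu.1.le
      have hVpos : (0:ℝ) < V u := hlow u hu0 hu.2.le
      have h1 : HasDerivAt V (deriv V u) u := (hVdiff u hu0).hasDerivAt
      have h2 := h1.rpow_const (p := 1 - p) (Or.inl (ne_of_gt hVpos))
      have h3 : HasDerivAt (fun x : ℝ => c1 * (1 - p) * x) (c1 * (1 - p)) u := by
        simpa using (hasDerivAt_id u).const_mul (c1 * (1 - p))
      exact (h2.add h3).congr_deriv (by ring)
    have hanti2 : AntitoneOn f2 (Icc T2 (T1 + T2)) := by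
      apply antitoneOn_of_deriv_nonpos (convex_Icc _ _)
      · apply ContinuousOn.add
        · intro u hu
          have hu0 : (0:ℝ) ≤ u := le_trans hT2.le hu.1
          have hVpos : (0:ℝ) < V u := hlow u hu0 hu.2
          exact ((hVdiff u hu0).continuousAt.rpow_const
            (Or.inl (ne_of_gt hVpos))).continuousWithinAt
        · exact (continuous_const.mul continuous_id).continuousOn
      · intro u hu
        rw [interior_Icc] at hu
        exact ((hderiv2 u hu).differentiableAt).differentiableWithinAt
      · intro u hu
        rw [interior_Icc] at hu
        rw [(hderiv2 u hu).deriv]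
        have hu0 : (0:ℝ) ≤ u := le_trans hT2.le hu.1.le
        have hVpos : (0:ℝ) < V u := hlow u hu0 hu.2.le
        have hd := hV' u hu0
        have hApos : 0 < V u ^ (1 - p - 1) := Real.rpow_pos_of_pos hVpos _
        have hAC : V u ^ (1 - p - 1) * V u ^ p = 1 := by
          rw [← Real.rpow_add hVpos]
          norm_num
        have hBq : 0 ≤ V u ^ (1 - p - 1) * V u ^ q := by positivity
        have hmul := mul_le_mul_of_nonneg_left hd hApos.le
        have h5 : V u ^ (1 - p - 1) * deriv V u ≤ -c1 := by nlinarith [hmul, hAC, hBq]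
        have h6 : 0 ≤ (1 - p) * (-(V u ^ (1 - p - 1) * deriv V u) - c1) :=
          mul_nonneg h1p.le (by linarith)
        nlinarith [h6]
    have hle := hanti2 (left_mem_Icc.mpr (by linarith)) (right_mem_Icc.mpr (by linarith))
      (by linarith)
    have hfa : f2 T2 = V T2 ^ (1 - p) + c1 * (1 - p) * T2 := rfl
    have hfb : f2 (T1 + T2) = V (T1 + T2) ^ (1 - p) + c1 * (1 - p) * (T1 + T2) := rfl
    have hle1 : V T2 ^ (1 - p) ≤ 1 :=
      Real.rpow_le_one (hVnn T2 hT2.le) hA h1p.le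
    have hgt0 : 0 < V (T1 + T2) ^ (1 - p) := Real.rpow_pos_of_pos hε _
    rw [hfa, hfb] at hle
    nlinarith [hT1eq]
  intro t ht
  have ht0 : (0:ℝ) ≤ t := le_trans (by linarith) ht
  have := hanti (show (T1 + T2 : ℝ) ∈ Ici 0 by simp; linarith) (mem_Ici.mpr ht0) ht
  have h2 := hVnn t ht0
  rw [key] at this
  linarith
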